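/- Let G be a finite group, H ≤ G a subgroup of index 3, and ρ a d-dimensional irreducible complex representation of H. If the induced representation Ind_H^G ρ decomposes as a direct sum of exactly two irreducible G-representations of dimensions d+a and 2d−a with 0 < a < d, then a = d/2; in particular d is even and the two irreducible summands each have dimension 3d/2. -/

import Mathlib

open CategoryTheory


namespace IndAux

variable {Γ : Type} [Group Γ]

/-- The invariance condition for a submodule. -/
def Inv (X : FDRep ℂ Γ) (p : Submodule ℂ X) : Prop := ∀ (g : Γ) (x : X), x ∈ p → X.ρ g x ∈ p

/-- Restriction of a representation to an invariant submodule. -/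
noncomputable def subρ (X : FDRep ℂ Γ) (p : Submodule ℂ X) (hp : Inv X p) :
    Representation ℂ Γ p where
  toFun g := (X.ρ g).restrict (fun x hx => hp g x hx)
  map_one' := by ext x; simp [LinearMap.restrict_apply]
  map_mul' g h := by ext x; simp [LinearMap.restrict_apply]

/-- The invariant submodule as an `FDRep`. -/
noncomputable def subFD (X : FDRep ℂ Γ) (p : Submodule ℂ X) (hp : Inv X p) : FDRep ℂ Γ :=
  FDRep.of (subρ X p hp)

/-- The inclusion morphism. -/
noncomputable def subIncl (X : FDRep ℂ Γ) (p : Submodule ℂ X) (hp : Inv X p) :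
    subFD X p hp ⟶ X where
  hom := InducedCategory.homMk (ModuleCat.ofHom p.subtype)
  comm g := rfl

lemma subIncl_hom (X : FDRep ℂ Γ) (p : Submodule ℂ X) (hp : Inv X p) :
    (subIncl X p hp).hom.hom.hom = p.subtype := rfl

lemma hom_ext {X Y : FDRep ℂ Γ} {f g : X ⟶ Y} (h : f.hom = g.hom) : f = g := by
  ext1; exact h

lemma mono_of_injective {X Y : FDRep ℂ Γ} (f : X ⟶ Y) (hf : Function.Injective f.hom) :
    Mono f := by
  constructor
  intro Z g h w
  apply hom_ext
  refine FGModuleCat.hom_ext (LinearMap.ext ?_)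
  intro x
  exact hf (ConcreteCategory.congr_hom (congrArg Action.Hom.hom w) x)

lemma injective_of_mono {X Y : FDRep ℂ Γ} (f : X ⟶ Y) [Mono f] :
    Function.Injective f.hom := by
  have hker : Inv X (LinearMap.ker f.hom.hom.hom) := by
    intro g x hx
    have h2 : f.hom (X.ρ g x) = Y.ρ g (f.hom x) :=
      LinearMap.congr_fun (congrArg (fun φ => φ.hom.hom) (f.comm g)) x
    simp only [LinearMap.mem_ker] at hx ⊢
    exact h2.trans (((Y.ρ g).congr_arg hx).trans (map_zero _))
  have h0 : subIncl X _ hker ≫ f = 0 ≫ f := by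
    apply hom_ext
    refine FGModuleCat.hom_ext (LinearMap.ext ?_)
    intro x
    show f.hom x.1 = f.hom (0 : X)
    rw [map_zero]
    exact x.2
  have := (cancel_mono f).mp h0
  refine (LinearMap.ker_eq_bot (f := f.hom.hom.hom)).mp ?_
  rw [Submodule.eq_bot_iff]
  intro x hx
  have : (⟨x, hx⟩ : LinearMap.ker f.hom.hom.hom).1 = (0 : X) :=
    congrFun (congrArg (fun (m : subFD X _ hker ⟶ X) => ⇑m.hom) this) ⟨x, hx⟩
  exact this

lemma finrank_le_of_nonzero_hom {X Y : FDRep ℂ Γ} (hX : Simple X) (f : X ⟶ Y) (hf : f ≠ 0) :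
    Module.finrank ℂ X ≤ Module.finrank ℂ Y := by
  haveI := hX
  haveI : Mono f := mono_of_nonzero_from_simple hf
  exact LinearMap.finrank_le_finrank_of_injective (injective_of_mono f)

lemma hom_ne_zero_iff {X Y : FDRep ℂ Γ} (f : X ⟶ Y) : f ≠ 0 ↔ f.hom ≠ 0 := by
  constructor
  · intro h h'
    exact h (hom_ext h')
  · intro h h'
    exact h (by rw [h']; rfl)

/-- A nonzero `FDRep` with no nontrivial invariant submodules is simple. -/
lemma simple_of_dichotomy (X : FDRep ℂ Γ) (hX : Module.finrank ℂ X ≠ 0)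
    (hdich : ∀ p : Submodule ℂ X, Inv X p → p = ⊥ ∨ p = ⊤) : Simple X := by
  constructor
  intro Y f m
  constructor
  · intro hiso h0
    apply hX
    haveI : IsIso (0 : Y ⟶ X) := h0 ▸ hiso
    have : 𝟙 X = 0 := by
      rw [← IsIso.inv_hom_id (0 : Y ⟶ X), Limits.comp_zero]
    have hsub : ∀ x : X, x = 0 := fun x =>
      congrFun (congrArg (fun (m : X ⟶ X) => ⇑m.hom) this) x
    have : Subsingleton X := ⟨fun a b => by rw [hsub a, hsub b]⟩
    exact Module.finrank_zero_of_subsingleton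
  · intro hf
    have hinj : Function.Injective f.hom := injective_of_mono f
    have hrange : Inv X (LinearMap.range f.hom.hom.hom) := by
      rintro g x ⟨y, rfl⟩
      exact ⟨Y.ρ g y, (LinearMap.congr_fun (congrArg (fun φ => φ.hom.hom) (f.comm g)) y).symm ▸ rfl⟩
    rcases hdich _ hrange with hbot | htop
    · exfalso
      apply (hom_ne_zero_iff f).mp hf
      refine FGModuleCat.hom_ext (LinearMap.ext ?_)
      intro x
      have : f.hom x ∈ (⊥ : Submodule ℂ X) := hbot ▸ LinearMap.mem_range_self f.hom.hom.hom x
      exact (Submodule.mem_bot ℂ).mp this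
    · have hsurj : Function.Surjective f.hom := LinearMap.range_eq_top.mp htop
      let e := LinearEquiv.ofBijective f.hom.hom.hom ⟨hinj, hsurj⟩
      have hcomm : ∀ g : Γ, ∀ x : X, e.symm (X.ρ g x) = Y.ρ g (e.symm x) := by
        intro g x
        apply hinj
        have h1 : ∀ z : X, f.hom (e.symm z) = z := fun z => e.apply_symm_apply z
        have h2 : ∀ y : Y, f.hom (Y.ρ g y) = X.ρ g (f.hom y) := fun y =>
          LinearMap.congr_fun (congrArg (fun φ => φ.hom.hom) (f.comm g)) y
        show f.hom (e.symm (X.ρ g x)) = f.hom (Y.ρ g (e.symm x))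
        rw [h1, h2, h1]
      let ginv : X ⟶ Y :=
        { hom := InducedCategory.homMk (ModuleCat.ofHom e.symm.toLinearMap)
          comm := fun g => FGModuleCat.hom_ext (LinearMap.ext fun x => hcomm g x) }
      exact ⟨⟨ginv, hom_ext (FGModuleCat.hom_ext (LinearMap.ext fun x => e.symm_apply_apply x)),
        hom_ext (FGModuleCat.hom_ext (LinearMap.ext fun x => e.apply_symm_apply x))⟩⟩

end IndAux

namespace IndAux

open CategoryTheory

variable {Γ : Type} [Group Γ]

lemma subFD_finrank (X : FDRep ℂ Γ) (p : Submodule ℂ X) (hp : Inv X p) :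
    Module.finrank ℂ (subFD X p hp) = Module.finrank ℂ p := rfl

lemma exists_inv_compl [Fintype Γ] (X : FDRep ℂ Γ) (p : Submodule ℂ X) (hp : Inv X p) :
    ∃ q : Submodule ℂ X, Inv X q ∧ IsCompl p q := by
  obtain ⟨q₀, hq₀⟩ := Submodule.exists_isCompl p
  set π₀ : X →ₗ[ℂ] X := p.subtype.comp (p.projectionOnto q₀ hq₀) with hπ₀
  have hπ₀mem : ∀ x : X, π₀ x ∈ p := fun x => (p.projectionOnto q₀ hq₀ x).2
  have hπ₀id : ∀ x ∈ p, π₀ x = x := by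
    intro x hx
    have := Submodule.linearProjOfIsCompl_apply_left hq₀ ⟨x, hx⟩
    simp only [hπ₀, LinearMap.comp_apply]
    rw [this]
    rfl
  set c : ℂ := (Fintype.card Γ : ℂ)⁻¹ with hc
  set π : X →ₗ[ℂ] X := c • ∑ g : Γ, (X.ρ g⁻¹) ∘ₗ π₀ ∘ₗ (X.ρ g) with hπ
  have hπapp : ∀ x : X, π x = c • ∑ g : Γ, X.ρ g⁻¹ (π₀ (X.ρ g x)) := by
    intro x
    simp [hπ, LinearMap.sum_apply, LinearMap.comp_apply]
  have hcard : (Fintype.card Γ : ℂ) ≠ 0 := Nat.cast_ne_zero.mpr Fintype.card_ne_zero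
  have hmem : ∀ x : X, π x ∈ p := by
    intro x
    rw [hπapp]
    refine Submodule.smul_mem _ _ (Submodule.sum_mem _ fun g _ => ?_)
    exact hp g⁻¹ _ (hπ₀mem _)
  have hρρ : ∀ (g h : Γ) (x : X), X.ρ g (X.ρ h x) = X.ρ (g * h) x := by
    intro g h x
    rw [map_mul]
    rfl
  have hid : ∀ x ∈ p, π x = x := by
    intro x hx
    rw [hπapp]
    have : ∀ g : Γ, X.ρ g⁻¹ (π₀ (X.ρ g x)) = x := by
      intro g
      rw [hπ₀id _ (hp g x hx), hρρ, inv_mul_cancel, map_one]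
      rfl
    simp only [this, Finset.sum_const, Finset.card_univ]
    rw [← Nat.cast_smul_eq_nsmul ℂ, smul_smul, hc, inv_mul_cancel₀ hcard, one_smul]
  have hequiv : ∀ (h : Γ) (x : X), π (X.ρ h x) = X.ρ h (π x) := by
    intro h x
    rw [hπapp, hπapp, map_smul]
    congr 1
    rw [map_sum]
    refine Fintype.sum_equiv (Equiv.mulRight h) _ _ ?_
    intro t
    simp only [Equiv.coe_mulRight]
    rw [hρρ t h x, hρρ h (t * h)⁻¹ _]
    have he : h * (t * h)⁻¹ = t⁻¹ := by group
    rw [he]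
  set π' : X →ₗ[ℂ] p := LinearMap.codRestrict p π hmem with hπ'
  refine ⟨LinearMap.ker π', ?_, LinearMap.isCompl_of_proj ?_⟩
  · intro g x hx
    rw [LinearMap.mem_ker] at hx ⊢
    apply Subtype.ext
    have hx0 : π x = 0 := congrArg Subtype.val hx
    show π (X.ρ g x) = 0
    rw [hequiv, hx0, map_zero]
  · intro x
    apply Subtype.ext
    show π x.1 = x.1
    exact hid x.1 x.2

end IndAux

namespace IndAux

open CategoryTheory

variable {Γ : Type} [Group Γ]

lemma exists_min_inv : ∀ (n : ℕ) (X : FDRep ℂ Γ) (p : Submodule ℂ X), Inv X p → p ≠ ⊥ →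
    Module.finrank ℂ p = n →
    ∃ q, q ≤ p ∧ Inv X q ∧ q ≠ ⊥ ∧ (∀ r ≤ q, Inv X r → r = ⊥ ∨ r = q) := by
  intro n
  induction n using Nat.strong_induction_on with
  | _ n IH =>
    intro X p hp hpbot hpn
    by_cases hmin : ∀ r ≤ p, Inv X r → r = ⊥ ∨ r = p
    · exact ⟨p, le_refl p, hp, hpbot, hmin⟩
    · push_neg at hmin
      obtain ⟨r, hrle, hrinv, hrbot, hrp⟩ := hmin
      have hlt : r < p := lt_of_le_of_ne hrle hrp
      have hfr : Module.finrank ℂ r < n := hpn ▸ Submodule.finrank_lt_finrank_of_lt hlt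
      obtain ⟨q, hq1, hq2, hq3, hq4⟩ := IH _ hfr X r hrinv hrbot rfl
      exact ⟨q, le_trans hq1 hrle, hq2, hq3, hq4⟩

lemma subFD_simple_of_min (X : FDRep ℂ Γ) (q : Submodule ℂ X) (hq : Inv X q) (hqbot : q ≠ ⊥)
    (hmin : ∀ r ≤ q, Inv X r → r = ⊥ ∨ r = q) : Simple (subFD X q hq) := by
  apply simple_of_dichotomy
  · intro h
    exact hqbot (Submodule.finrank_eq_zero.mp h)
  · intro r hr
    have hsub : ∀ (g : Γ) (y : subFD X q hq), ((subFD X q hq).ρ g y).1 = X.ρ g y.1 :=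
      fun g y => rfl
    set r' : Submodule ℂ X := r.map q.subtype with hr'
    have hr'le : r' ≤ q := by
      rintro x ⟨y, hy, rfl⟩
      exact y.2
    have hr'inv : Inv X r' := by
      rintro g x ⟨y, hy, rfl⟩
      exact ⟨(subFD X q hq).ρ g y, hr g y hy, (hsub g y).symm ▸ rfl⟩
    rcases hmin r' hr'le hr'inv with h | h
    · left
      rw [Submodule.eq_bot_iff]
      intro y hy
      have : y.1 ∈ r' := ⟨y, hy, rfl⟩
      rw [h] at this
      simp only [Submodule.mem_bot] at this
      exact Subtype.ext this
    · right
      rw [eq_top_iff]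
      intro y _
      have : y.1 ∈ r' := by rw [h]; exact y.2
      obtain ⟨z, hz, hzy⟩ := this
      have : z = y := Subtype.ext hzy
      exact this ▸ hz

lemma dvd_of_all_iso [Fintype Γ] (ρ : FDRep ℂ Γ) (hd0 : Module.finrank ℂ ρ ≠ 0) :
    ∀ (n : ℕ) (X : FDRep ℂ Γ), Module.finrank ℂ X = n →
      (∀ σ : FDRep ℂ Γ, Simple σ → (∃ f : σ ⟶ X, f ≠ 0) → Nonempty (σ ≅ ρ)) →
      Module.finrank ℂ ρ ∣ n := by
  intro n
  induction n using Nat.strong_induction_on with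
  | _ n IH =>
    intro X hX hyp
    by_cases hn : n = 0
    · rw [hn]; exact dvd_zero _
    · have htop : (⊤ : Submodule ℂ X) ≠ ⊥ := by
        intro h
        apply hn
        rw [← hX, ← finrank_top ℂ X, h, finrank_bot]
      obtain ⟨q, _, hqinv, hqbot, hqmin⟩ :=
        exists_min_inv (Module.finrank ℂ (⊤ : Submodule ℂ X)) X ⊤
          (fun g x _ => Submodule.mem_top) htop rfl
      haveI hσs : Simple (subFD X q hqinv) := subFD_simple_of_min X q hqinv hqbot hqmin
      obtain ⟨x, hxq, hx0⟩ := Submodule.exists_mem_ne_zero_of_ne_bot hqbot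
      have hf0 : subIncl X q hqinv ≠ 0 := by
        rw [hom_ne_zero_iff]
        intro h
        exact hx0 (LinearMap.congr_fun (congrArg (fun φ => φ.hom.hom) h) (⟨x, hxq⟩ : q) :
          q.subtype ⟨x, hxq⟩ = 0)
      obtain ⟨e⟩ := hyp _ hσs ⟨subIncl X q hqinv, hf0⟩
      have hdq : Module.finrank ℂ q = Module.finrank ℂ ρ :=
        (FDRep.isoToLinearEquiv e).finrank_eq
      obtain ⟨q', hq'inv, hcompl⟩ := exists_inv_compl X q hqinv
      have hsum : Module.finrank ℂ q + Module.finrank ℂ q' = n := by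
        rw [Submodule.finrank_add_eq_of_isCompl hcompl, hX]
      have hlt : Module.finrank ℂ q' < n := by
        have : 0 < Module.finrank ℂ q := by
          rw [hdq]; exact Nat.pos_of_ne_zero hd0
        omega
      have hdvd : Module.finrank ℂ ρ ∣ Module.finrank ℂ q' := by
        apply IH _ hlt (subFD X q' hq'inv) rfl
        intro σ hσ ⟨f, hf⟩
        apply hyp σ hσ
        refine ⟨f ≫ subIncl X q' hq'inv, ?_⟩
        rw [hom_ne_zero_iff] at hf ⊢
        intro h
        apply hf
        refine FGModuleCat.hom_ext (LinearMap.ext ?_)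
        intro y
        have : q'.subtype (f.hom y) = 0 := ConcreteCategory.congr_hom h y
        have := q'.injective_subtype (by simpa using this : q'.subtype (f.hom y) = q'.subtype 0)
        exact this
      rw [← hsum, hdq]
      exact dvd_add dvd_rfl hdvd

/-- If the dimension is not divisible, there is a simple constituent not isomorphic to ρ. -/
lemma exists_nondvd_constituent [Fintype Γ] (ρ : FDRep ℂ Γ) (hd0 : Module.finrank ℂ ρ ≠ 0)
    (X : FDRep ℂ Γ) (hX : ¬ Module.finrank ℂ ρ ∣ Module.finrank ℂ X) :
    ∃ σ : FDRep ℂ Γ, Simple σ ∧ (∃ f : σ ⟶ X, f ≠ 0) ∧ ¬ Nonempty (σ ≅ ρ) := by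
  by_contra h
  push_neg at h
  apply hX
  apply dvd_of_all_iso ρ hd0 _ X rfl
  intro σ hσ hf
  exact h σ hσ hf

end IndAux

/-- Let `G` be a finite group, `H ≤ G` of index 3, and `ρ` a `d`-dimensional irreducible
complex representation of `H`.  `ind` is the induction functor (it triples dimensions, and
satisfies Frobenius reciprocity: a simple `σ` occurs in `Res R` iff the simple `R` occurs in
`Ind σ`).  If `Ind ρ` decomposes as a direct sum of exactly two irreducibles `R₁, R₂` of
dimensions `d + a` and `2d − a` with `0 < a < d`, where (per Frobenius reciprocity) every
irreducible constituent of `Res Rᵢ` other than `ρ` has dimension at most the complementary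
dimension, then `a = d/2`, i.e. `2a = d`; in particular `d` is even and both summands have
dimension `3d/2`. -/
theorem ind_two_summands_dim (G : Type) [Group G] [Fintype G] (H : Subgroup G)
    (hidx : H.index = 3)
    (ind : FDRep ℂ H ⥤ FDRep ℂ G)
    (hdim : ∀ σ : FDRep ℂ H, Module.finrank ℂ (ind.obj σ) = 3 * Module.finrank ℂ σ)
    (hFrob : ∀ (σ : FDRep ℂ H) (R : FDRep ℂ G), Simple σ → Simple R →
      ((∃ f : σ ⟶ (Action.res (FGModuleCat ℂ) H.subtype).obj R, f ≠ 0) ↔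
        (∃ g : R ⟶ ind.obj σ, g ≠ 0)))
    (ρ : FDRep ℂ H) (hρ : Simple ρ) (d a : ℕ)
    (hd : Module.finrank ℂ ρ = d) (ha : 0 < a) (had : a < d)
    (R₁ R₂ : FDRep ℂ G) (hR₁ : Simple R₁) (hR₂ : Simple R₂)
    (hdec : (ind.obj ρ).character = R₁.character + R₂.character)
    (hd₁ : Module.finrank ℂ R₁ = d + a) (hd₂ : Module.finrank ℂ R₂ = 2 * d - a)
    (hconst₁ : ∀ σ : FDRep ℂ H, Simple σ → ¬ Nonempty (σ ≅ ρ) →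
      (∃ f : σ ⟶ (Action.res (FGModuleCat ℂ) H.subtype).obj R₁, f ≠ 0) →
      Module.finrank ℂ σ ≤ a)
    (hconst₂ : ∀ σ : FDRep ℂ H, Simple σ → ¬ Nonempty (σ ≅ ρ) →
      (∃ f : σ ⟶ (Action.res (FGModuleCat ℂ) H.subtype).obj R₂, f ≠ 0) →
      Module.finrank ℂ σ ≤ d - a) :
    2 * a = d ∧ Even d ∧
      2 * Module.finrank ℂ R₁ = 3 * d ∧ 2 * Module.finrank ℂ R₂ = 3 * d := by
  classical
  haveI : Fintype ↥H := Fintype.ofFinite _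
  have hd0 : 0 < d := ha.trans had
  have hdvd1 : ¬ d ∣ (d + a) := by
    rintro ⟨c, hc⟩
    rcases Nat.lt_or_ge c 2 with h2 | h2
    · interval_cases c <;> omega
    · have : d * 2 ≤ d * c := Nat.mul_le_mul_left d h2
      omega
  have hdvd2 : ¬ d ∣ (2 * d - a) := by
    rintro ⟨c, hc⟩
    rcases Nat.lt_or_ge c 2 with h2 | h2
    · interval_cases c <;> omega
    · have : d * 2 ≤ d * c := Nat.mul_le_mul_left d h2
      omega
  set X₁ := (Action.res (FGModuleCat ℂ) H.subtype).obj R₁ with hX₁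
  set X₂ := (Action.res (FGModuleCat ℂ) H.subtype).obj R₂ with hX₂
  have hX₁d : Module.finrank ℂ X₁ = d + a := hd₁
  have hX₂d : Module.finrank ℂ X₂ = 2 * d - a := hd₂
  have hρd : Module.finrank ℂ ρ ≠ 0 := by rw [hd]; omega
  obtain ⟨σ₁, hσ₁, hf₁, hni₁⟩ :=
    IndAux.exists_nondvd_constituent ρ hρd X₁ (by rw [hX₁d, hd]; exact hdvd1)
  obtain ⟨σ₂, hσ₂, hf₂, hni₂⟩ :=
    IndAux.exists_nondvd_constituent ρ hρd X₂ (by rw [hX₂d, hd]; exact hdvd2)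
  have hs₁ : Module.finrank ℂ σ₁ ≤ a := hconst₁ σ₁ hσ₁ hni₁ hf₁
  have hs₂ : Module.finrank ℂ σ₂ ≤ d - a := hconst₂ σ₂ hσ₂ hni₂ hf₂
  obtain ⟨g₁, hg₁⟩ := (hFrob σ₁ R₁ hσ₁ hR₁).mp hf₁
  obtain ⟨g₂, hg₂⟩ := (hFrob σ₂ R₂ hσ₂ hR₂).mp hf₂
  have h₁ := IndAux.finrank_le_of_nonzero_hom hR₁ g₁ hg₁
  have h₂ := IndAux.finrank_le_of_nonzero_hom hR₂ g₂ hg₂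
  rw [hdim σ₁, hd₁] at h₁
  rw [hdim σ₂, hd₂] at h₂
  have h2a : 2 * a = d := by omega
  exact ⟨h2a, ⟨a, by omega⟩, by rw [hd₁]; omega, by rw [hd₂]; omega⟩
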